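/- Let α ∈ (0,1) be irrational with convergents p_n/q_n and n ≥ 1 odd. If k ∈ {1, …, q_{n+1} − 1} and p ∈ ℤ satisfy 0 < kα + p < q_{n−1}α − p_{n−1}, then k = q_{n−1} + i·q_n and p = −p_{n−1} − i·p_n for some i ∈ {1, …, a_{n+1} − 1}. -/

import Mathlib

open scoped BigOperators

/-- The Gauss map `x ↦ 1/x - ⌊1/x⌋` (with `G 0 = 0`). -/
noncomputable def gaussMap (x : ℝ) : ℝ := if x = 0 then 0 else 1 / x - ⌊1 / x⌋

/-- Iterates `α_n = G^n(α)` of the Gauss map. -/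
noncomputable def alphaSeq (α : ℝ) (n : ℕ) : ℝ := gaussMap^[n] α

/-- Partial quotients `a_n` of the continued fraction of `α`. -/
noncomputable def aSeq (α : ℝ) : ℕ → ℤ
  | 0 => 0
  | n + 1 => ⌊1 / alphaSeq α n⌋

/-- Denominators `q_n` of the best rational approximations of `α`. -/
noncomputable def qSeq (α : ℝ) : ℕ → ℤ
  | 0 => 1
  | 1 => ⌊1 / α⌋
  | n + 2 => qSeq α n + aSeq α (n + 2) * qSeq α (n + 1)

/-- Numerators `p_n` of the best rational approximations of `α`. -/
noncomputable def pSeq (α : ℝ) : ℕ → ℤ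
  | 0 => 0
  | 1 => 1
  | n + 2 => pSeq α n + aSeq α (n + 2) * pSeq α (n + 1)

noncomputable def betaSeq (α : ℝ) (m : ℕ) : ℝ :=
  (-1 : ℝ) ^ m * ((qSeq α m : ℝ) * α - (pSeq α m : ℝ))

lemma alphaSeq_zero (α : ℝ) : alphaSeq α 0 = α := rfl

lemma alphaSeq_succ (α : ℝ) (n : ℕ) : alphaSeq α (n + 1) = gaussMap (alphaSeq α n) :=
  Function.iterate_succ_apply' _ _ _

lemma alphaSeq_mem (α : ℝ) (hα : α ∈ Set.Ioo (0 : ℝ) 1) (hirr : Irrational α) (m : ℕ) :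
    alphaSeq α m ∈ Set.Ioo (0 : ℝ) 1 ∧ Irrational (alphaSeq α m) := by
  induction m with
  | zero => exact ⟨hα, hirr⟩
  | succ m ih =>
    obtain ⟨hm, hi⟩ := ih
    have hne : alphaSeq α m ≠ 0 := hi.ne_zero
    have h1 : alphaSeq α (m + 1) = Int.fract (1 / alphaSeq α m) := by
      rw [alphaSeq_succ, gaussMap, if_neg hne, Int.fract]
    have hinv : Irrational (1 / alphaSeq α m) := by
      simpa [one_div] using hi.inv
    have hfi : Irrational (Int.fract (1 / alphaSeq α m)) := by
      rw [Int.fract]; exact hinv.sub_intCast _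
    refine ⟨?_, by rw [h1]; exact hfi⟩
    rw [h1]
    exact ⟨lt_of_le_of_ne (Int.fract_nonneg _) fun h => hfi.ne_zero h.symm, Int.fract_lt_one _⟩

lemma beta_rec (α : ℝ) (j : ℕ) :
    betaSeq α (j + 2) = betaSeq α j - (aSeq α (j + 2) : ℝ) * betaSeq α (j + 1) := by
  simp only [betaSeq, qSeq, pSeq]
  push_cast
  ring

lemma beta_succ (α : ℝ) (hα : α ∈ Set.Ioo (0 : ℝ) 1) (hirr : Irrational α) (m : ℕ) :
    betaSeq α (m + 1) = betaSeq α m * alphaSeq α (m + 1) := by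
  induction m with
  | zero =>
    have hne : α ≠ 0 := ne_of_gt hα.1
    have h1 : alphaSeq α 1 = 1 / α - ⌊1 / α⌋ := by
      rw [alphaSeq_succ, alphaSeq_zero, gaussMap, if_neg hne]
    simp only [betaSeq, qSeq, pSeq, h1, alphaSeq_zero]
    push_cast
    field_simp
    ring
  | succ m ih =>
    have hm := alphaSeq_mem α hα hirr (m + 1)
    have hne : alphaSeq α (m + 1) ≠ 0 := hm.2.ne_zero
    have h1 : alphaSeq α (m + 2) = 1 / alphaSeq α (m + 1) - ⌊1 / alphaSeq α (m + 1)⌋ := by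
      rw [alphaSeq_succ, gaussMap, if_neg hne]
    have h2 : (aSeq α (m + 2) : ℝ) = (⌊1 / alphaSeq α (m + 1)⌋ : ℝ) := by
      simp [aSeq]
    rw [beta_rec, ih, h1, h2]
    field_simp

lemma beta_pos (α : ℝ) (hα : α ∈ Set.Ioo (0 : ℝ) 1) (hirr : Irrational α) (m : ℕ) :
    0 < betaSeq α m := by
  induction m with
  | zero => simpa [betaSeq, qSeq, pSeq] using hα.1
  | succ m ih =>
    rw [beta_succ α hα hirr]
    exact mul_pos ih (alphaSeq_mem α hα hirr (m + 1)).1.1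

lemma beta_lt (α : ℝ) (hα : α ∈ Set.Ioo (0 : ℝ) 1) (hirr : Irrational α) (m : ℕ) :
    betaSeq α (m + 1) < betaSeq α m := by
  rw [beta_succ α hα hirr]
  nlinarith [beta_pos α hα hirr m, (alphaSeq_mem α hα hirr (m + 1)).1.2,
    (alphaSeq_mem α hα hirr (m + 1)).1.1]

lemma aSeq_pos (α : ℝ) (hα : α ∈ Set.Ioo (0 : ℝ) 1) (hirr : Irrational α) (m : ℕ) :
    1 ≤ aSeq α (m + 1) := by
  have h := (alphaSeq_mem α hα hirr m).1
  have : (1 : ℝ) ≤ 1 / alphaSeq α m := by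
    rw [le_div_iff₀ h.1]; nlinarith [h.2]
  simp only [aSeq]
  exact Int.le_floor.2 (by exact_mod_cast this)

lemma qSeq_pos (α : ℝ) (hα : α ∈ Set.Ioo (0 : ℝ) 1) (hirr : Irrational α) (m : ℕ) :
    1 ≤ qSeq α m := by
  have key : ∀ m, 1 ≤ qSeq α m ∧ 1 ≤ qSeq α (m + 1) := by
    intro m
    induction m with
    | zero =>
      refine ⟨by simp [qSeq], ?_⟩
      have := aSeq_pos α hα hirr 0
      simp only [aSeq, alphaSeq_zero] at this
      simpa [qSeq] using this
    | succ m ih =>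
      refine ⟨ih.2, ?_⟩
      have ha := aSeq_pos α hα hirr (m + 1)
      show 1 ≤ qSeq α m + aSeq α (m + 2) * qSeq α (m + 1)
      nlinarith [ih.1, ih.2]
  exact (key m).1

lemma det_eq (α : ℝ) (m : ℕ) :
    qSeq α (m + 1) * pSeq α m - pSeq α (m + 1) * qSeq α m = (-1) ^ (m + 1) := by
  induction m with
  | zero => simp [qSeq, pSeq]
  | succ m ih =>
    show (qSeq α m + aSeq α (m + 2) * qSeq α (m + 1)) * pSeq α (m + 1) -
      (pSeq α m + aSeq α (m + 2) * pSeq α (m + 1)) * qSeq α (m + 1) = (-1) ^ (m + 2)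
    linear_combination (-1 : ℤ) * ih

set_option maxHeartbeats 1000000 in
/-- Let `α ∈ (0,1)` be irrational with convergents `p_n/q_n`, `n ≥ 1` odd. If
`k ∈ {1,…,q_{n+1}−1}` and `p ∈ ℤ` satisfy `0 < kα + p < q_{n−1}α − p_{n−1}`, then
`k = q_{n−1} + i·q_n` and `p = −p_{n−1} − i·p_n` for some `i ∈ {1,…,a_{n+1}−1}`. -/
theorem stmt15 (α : ℝ) (hα : α ∈ Set.Ioo (0 : ℝ) 1) (hirr : Irrational α)
    (n : ℕ) (hodd : Odd n) (hn : 1 ≤ n) (k p : ℤ)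
    (hk1 : 1 ≤ k) (hk2 : k ≤ qSeq α (n + 1) - 1)
    (hlow : 0 < (k : ℝ) * α + (p : ℝ))
    (hup : (k : ℝ) * α + (p : ℝ) < (qSeq α (n - 1) : ℝ) * α - (pSeq α (n - 1) : ℝ)) :
    ∃ i : ℤ, 1 ≤ i ∧ i ≤ aSeq α (n + 1) - 1 ∧
      k = qSeq α (n - 1) + i * qSeq α n ∧ p = -pSeq α (n - 1) - i * pSeq α n := by
  obtain ⟨j, rfl⟩ : ∃ j, n = j + 1 := ⟨n - 1, (Nat.succ_pred_eq_of_pos hn).symm⟩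
  have hj : j + 1 - 1 = j := rfl
  rw [hj] at hup ⊢
  have hje : Even j := by rcases hodd with ⟨t, ht⟩; exact ⟨t, by omega⟩
  have hB0 : betaSeq α j = (qSeq α j : ℝ) * α - (pSeq α j : ℝ) := by
    simp [betaSeq, hje.neg_one_pow]
  have hB1 : betaSeq α (j + 1) = -((qSeq α (j + 1) : ℝ) * α - (pSeq α (j + 1) : ℝ)) := by
    simp [betaSeq, pow_succ, hje.neg_one_pow]
  have hdet : qSeq α (j + 1) * pSeq α j - pSeq α (j + 1) * qSeq α j = -1 := by
    rw [det_eq α j]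
    exact Odd.neg_one_pow (by rcases hodd with ⟨t, ht⟩; exact ⟨t, by omega⟩)
  set x : ℤ := -(pSeq α j * k + qSeq α j * p) with hxdef
  set y : ℤ := pSeq α (j + 1) * k + qSeq α (j + 1) * p with hydef
  have hk' : k = x * qSeq α (j + 1) + y * qSeq α j := by
    rw [hxdef, hydef]; linear_combination k * hdet
  have hp' : p = -(x * pSeq α (j + 1) + y * pSeq α j) := by
    rw [hxdef, hydef]; linear_combination p * hdet
  have hkR : (k : ℝ) = (x : ℝ) * (qSeq α (j + 1) : ℝ) + (y : ℝ) * (qSeq α j : ℝ) := by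
    exact_mod_cast congrArg (Int.cast : ℤ → ℝ) hk'
  have hpR : (p : ℝ) = -((x : ℝ) * (pSeq α (j + 1) : ℝ) + (y : ℝ) * (pSeq α j : ℝ)) := by
    exact_mod_cast congrArg (Int.cast : ℤ → ℝ) hp'
  have hval : (k : ℝ) * α + (p : ℝ) = (y : ℝ) * betaSeq α j - (x : ℝ) * betaSeq α (j + 1) := by
    rw [hB0, hB1, hkR, hpR]; ring
  have hpos : 0 < (y : ℝ) * betaSeq α j - (x : ℝ) * betaSeq α (j + 1) := hval ▸ hlow
  have hup2 : (y : ℝ) * betaSeq α j - (x : ℝ) * betaSeq α (j + 1) < betaSeq α j := by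
    rw [← hval, hB0]; exact hup
  have hB0pos := beta_pos α hα hirr j
  have hB1pos := beta_pos α hα hirr (j + 1)
  have hB2pos := beta_pos α hα hirr (j + 2)
  have hrec := beta_rec α j
  have hB2lt := beta_lt α hα hirr (j + 1)
  have ha : 1 ≤ aSeq α (j + 2) := aSeq_pos α hα hirr (j + 1)
  have hqj : 1 ≤ qSeq α j := qSeq_pos α hα hirr j
  have hqj1 : 1 ≤ qSeq α (j + 1) := qSeq_pos α hα hirr (j + 1)
  have hqrec : qSeq α (j + 2) = qSeq α j + aSeq α (j + 2) * qSeq α (j + 1) := by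
    rw [qSeq]
  have hk2' : k ≤ qSeq α (j + 2) - 1 := hk2
  set a : ℤ := aSeq α (j + 2) with hadef
  -- y ≥ 1
  have hy1 : 1 ≤ y := by
    by_contra h
    push_neg at h
    have hyZ : y ≤ 0 := by omega
    have hyR : (y : ℝ) ≤ 0 := by exact_mod_cast hyZ
    have h1 : (y : ℝ) * betaSeq α j ≤ 0 := mul_nonpos_of_nonpos_of_nonneg hyR hB0pos.le
    have h2 : (x : ℝ) * betaSeq α (j + 1) < 0 * betaSeq α (j + 1) := by linarith
    have hxR : (x : ℝ) < 0 := (mul_lt_mul_iff_left₀ hB1pos).1 h2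
    have hx0 : x < 0 := by exact_mod_cast hxR
    have hxZ : x ≤ -1 := by omega
    linarith [mul_le_mul_of_nonneg_right hxZ (by omega : (0:ℤ) ≤ qSeq α (j+1)),
      mul_nonpos_of_nonpos_of_nonneg hyZ (by omega : (0:ℤ) ≤ qSeq α j)]
  -- y ≤ 1
  have hy2 : y ≤ 1 := by
    by_contra h
    push_neg at h
    have hyZ : 2 ≤ y := by omega
    have hyR : (2 : ℝ) ≤ (y : ℝ) := by exact_mod_cast hyZ
    have haR : (1 : ℝ) ≤ (a : ℝ) := by exact_mod_cast ha
    have hrecR : betaSeq α (j + 2) = betaSeq α j - (a : ℝ) * betaSeq α (j + 1) := hrec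
    have h1 : (0 : ℝ) ≤ ((y : ℝ) - 2) * betaSeq α j := mul_nonneg (by linarith) hB0pos.le
    have h2 : (a : ℝ) * betaSeq α (j + 1) < (x : ℝ) * betaSeq α (j + 1) := by nlinarith
    have hxgt : (a : ℝ) < (x : ℝ) := (mul_lt_mul_iff_left₀ hB1pos).1 h2
    have hx0 : a < x := by exact_mod_cast hxgt
    have hxZ : a + 1 ≤ x := by omega
    linarith [mul_le_mul_of_nonneg_right hxZ (by omega : (0:ℤ) ≤ qSeq α (j+1)),
      mul_le_mul_of_nonneg_right hyZ (by omega : (0:ℤ) ≤ qSeq α j)]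
  have hy : y = 1 := le_antisymm hy2 hy1
  rw [hy] at hk' hp'
  rw [hy] at hpos hup2
  rw [Int.cast_one, one_mul] at hpos hup2
  have hx1 : 1 ≤ x := by
    have h2 : 0 * betaSeq α (j + 1) < (x : ℝ) * betaSeq α (j + 1) := by linarith
    have h0 : 0 < (x : ℝ) := (mul_lt_mul_iff_left₀ hB1pos).1 h2
    have : 0 < x := by exact_mod_cast h0
    omega
  have hrecR : betaSeq α (j + 2) = betaSeq α j - (a : ℝ) * betaSeq α (j + 1) := hrec
  have hxle : x ≤ a := by
    have h2 : (x : ℝ) * betaSeq α (j + 1) < ((a : ℝ) + 1) * betaSeq α (j + 1) := by linarith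
    have h0 : (x : ℝ) < (a : ℝ) + 1 := (mul_lt_mul_iff_left₀ hB1pos).1 h2
    have : x < a + 1 := by exact_mod_cast h0
    omega
  have hxne : x ≠ a := by
    intro hxa
    rw [hxa] at hk'
    have : k = qSeq α (j + 2) := by rw [hqrec]; linarith
    omega
  have hgoal1 : k = qSeq α j + x * qSeq α (j + 1) := by linarith
  have hgoal2 : p = -pSeq α j - x * pSeq α (j + 1) := by linarith
  exact ⟨x, hx1, by omega, hgoal1, hgoal2⟩
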